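/- Let y ∈ ℝⁿ with y ≠ 0, X an n×d real matrix, and β ∈ ℝᵈ. Then the infimum, over all pairs (D, v) with D a d×d positive semidefinite real matrix and v ≥ 0 a real number such that y − Xβ ∈ range(v I_n) and β ∈ range(D), of (y − Xβ)ᵀ (v I)† (y − Xβ) + βᵀ D† β + tr(X D Xᵀ + v I)/‖y‖₂² equals (2n/‖y‖₂) · ( √(MSPE(β)) + (1/√n) √(βᵀ Ĉ β) ), where MSPE(β) = ‖y − Xβ‖₂²/n and Ĉ = XᵀX/n. Consequently, minimizing this infimum over β is equivalent to minimizing √(MSPE(β)) + (1/√n) ‖β‖_{Ĉ}, i.e., the criterion with tuned Ĉ-weighted ℓ₂ regularization. -/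

import Mathlib

open Matrix

/-- The four Penrose conditions: `B` is the Moore–Penrose pseudoinverse of `A`. -/
def IsMoorePenrose {m n : Type*} [Fintype m] [Fintype n]
    (A : Matrix m n ℝ) (B : Matrix n m ℝ) : Prop :=
  A * B * A = A ∧ B * A * B = B ∧ (A * B)ᵀ = A * B ∧ (B * A)ᵀ = B * A

lemma mp_unique {k : ℕ} {A B C : Matrix (Fin k) (Fin k) ℝ}
    (hB : IsMoorePenrose A B) (hC : IsMoorePenrose A C) : B = C := by
  obtain ⟨b1, b2, b3, b4⟩ := hB
  obtain ⟨c1, c2, c3, c4⟩ := hC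
  have hAB : A * B = A * C := by
    calc A * B = (A * B)ᵀ := b3.symm
    _ = ((A * C * A) * B)ᵀ := by rw [c1]
    _ = ((A * C) * (A * B))ᵀ := by noncomm_ring
    _ = (A * B)ᵀ * (A * C)ᵀ := transpose_mul _ _
    _ = (A * B) * (A * C) := by rw [b3, c3]
    _ = (A * B * A) * C := by noncomm_ring
    _ = A * C := by rw [b1]
  have hBA : B * A = C * A := by
    calc B * A = (B * A)ᵀ := b4.symm
    _ = (B * (A * C * A))ᵀ := by rw [c1]
    _ = ((B * A) * (C * A))ᵀ := by noncomm_ring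
    _ = (C * A)ᵀ * (B * A)ᵀ := transpose_mul _ _
    _ = (C * A) * (B * A) := by rw [b4, c4]
    _ = C * (A * B * A) := by noncomm_ring
    _ = C * A := by rw [b1]
  calc B = B * A * B := b2.symm
  _ = B * (A * C) := by rw [mul_assoc, hAB]
  _ = C * A * C := by rw [← mul_assoc, hBA, mul_assoc]
  _ = C := c2

lemma dot_symm {k : ℕ} {M : Matrix (Fin k) (Fin k) ℝ} (h : Mᵀ = M) (u w : Fin k → ℝ) :
    u ⬝ᵥ M *ᵥ w = w ⬝ᵥ M *ᵥ u := by
  conv_lhs => rw [dotProduct_mulVec, ← h, vecMul_transpose]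
  exact dotProduct_comm _ _

lemma vecMulVec_mulVec' {k : ℕ} (u v x : Fin k → ℝ) :
    (vecMulVec u v) *ᵥ x = (v ⬝ᵥ x) • u := by
  ext i
  simp only [vecMulVec_apply, mulVec, dotProduct, Pi.smul_apply, smul_eq_mul,
    Finset.sum_mul, Finset.mul_sum]
  exact Finset.sum_congr rfl fun _ _ => by ring

lemma trace_vecMulVec' {k : ℕ} (u v : Fin k → ℝ) : (vecMulVec u v).trace = u ⬝ᵥ v := by
  simp [trace, vecMulVec_apply, dotProduct, diag]

lemma conj_vecMulVec {n d : ℕ} (X : Matrix (Fin n) (Fin d) ℝ) (β : Fin d → ℝ) :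
    X * vecMulVec β β * Xᵀ = vecMulVec (X *ᵥ β) (X *ᵥ β) := by
  ext i j
  simp only [mul_apply, vecMulVec_apply, mulVec, dotProduct, transpose_apply,
    Finset.sum_mul, Finset.mul_sum]
  conv_lhs => rw [Finset.sum_comm]
  conv_rhs => rw [Finset.sum_comm]
  exact Finset.sum_congr rfl fun a _ => Finset.sum_congr rfl fun b _ => by ring

lemma trace_XDXt {n d : ℕ} (X : Matrix (Fin n) (Fin d) ℝ) (D : Matrix (Fin d) (Fin d) ℝ) :
    (X * D * Xᵀ).trace = ∑ i, (X i) ⬝ᵥ D *ᵥ (X i) := by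
  simp only [trace, diag_apply, mul_apply, mulVec, dotProduct, transpose_apply,
    Finset.sum_mul, Finset.mul_sum]
  refine Finset.sum_congr rfl fun i _ => ?_
  rw [Finset.sum_comm]
  exact Finset.sum_congr rfl fun a _ => Finset.sum_congr rfl fun b _ => by ring

lemma trace_smul_one (n : ℕ) (v : ℝ) :
    (v • (1 : Matrix (Fin n) (Fin n) ℝ)).trace = n * v := by
  simp [trace_smul, trace_one]; ring

lemma dot_transpose_mulVec {n d : ℕ} (X : Matrix (Fin n) (Fin d) ℝ) (β : Fin d → ℝ)
    (u : Fin n → ℝ) : β ⬝ᵥ (Xᵀ *ᵥ u) = (X *ᵥ β) ⬝ᵥ u := by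
  rw [dotProduct_mulVec, vecMul_transpose]

lemma cs_psd {k : ℕ} {M : Matrix (Fin k) (Fin k) ℝ} (hM : M.PosSemidef)
    (u w : Fin k → ℝ) : (u ⬝ᵥ M *ᵥ w)^2 ≤ (u ⬝ᵥ M *ᵥ u) * (w ⬝ᵥ M *ᵥ w) := by
  have hsym : Mᵀ = M := by simpa [Matrix.IsSymm] using hM.1
  have hquad : ∀ t : ℝ, 0 ≤ (w ⬝ᵥ M *ᵥ w) * (t * t) + (2 * (u ⬝ᵥ M *ᵥ w)) * t
      + (u ⬝ᵥ M *ᵥ u) := by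
    intro t
    have h0 : (0:ℝ) ≤ (u + t • w) ⬝ᵥ M *ᵥ (u + t • w) := by simpa using hM.dotProduct_mulVec_nonneg (u + t • w)
    have hx : (u + t • w) ⬝ᵥ M *ᵥ (u + t • w)
        = (w ⬝ᵥ M *ᵥ w) * (t * t) + (2 * (u ⬝ᵥ M *ᵥ w)) * t + (u ⬝ᵥ M *ᵥ u) := by
      simp only [mulVec_add, mulVec_smul, dotProduct_add, add_dotProduct,
        dotProduct_smul, smul_dotProduct, smul_eq_mul]
      rw [dot_symm hsym w u]
      ring
    linarith [hx ▸ h0]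
  have hd := discrim_le_zero hquad
  simp only [discrim] at hd
  nlinarith [hd]

lemma transpose_mul3 {k : ℕ} (P Q R : Matrix (Fin k) (Fin k) ℝ) :
    (P * Q * R)ᵀ = Rᵀ * Qᵀ * Pᵀ := by
  rw [transpose_mul, transpose_mul, mul_assoc]

lemma mp_transpose {k : ℕ} {A B : Matrix (Fin k) (Fin k) ℝ}
    (h : IsMoorePenrose A B) : IsMoorePenrose Aᵀ Bᵀ := by
  obtain ⟨b1, b2, b3, b4⟩ := h
  refine ⟨?_, ?_, ?_, ?_⟩
  · rw [← transpose_mul3, b1]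
  · rw [← transpose_mul3, b2]
  · rw [← transpose_mul, transpose_transpose, b4]
  · rw [← transpose_mul, transpose_transpose, b3]

lemma mp_symm {k : ℕ} {D Dd : Matrix (Fin k) (Fin k) ℝ} (hsym : Dᵀ = D)
    (h : IsMoorePenrose D Dd) : Ddᵀ = Dd := by
  have h2 : IsMoorePenrose D Ddᵀ := by
    have := mp_transpose h; rwa [hsym] at this
  exact mp_unique h2 h

lemma mp_psd {k : ℕ} {D Dd : Matrix (Fin k) (Fin k) ℝ} (hD : D.PosSemidef)
    (h : IsMoorePenrose D Dd) (x : Fin k → ℝ) : 0 ≤ x ⬝ᵥ Dd *ᵥ x := by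
  have hsym : Dᵀ = D := by simpa [Matrix.IsSymm] using hD.1
  have hds := mp_symm hsym h
  have key : x ⬝ᵥ Dd *ᵥ x = (Dd *ᵥ x) ⬝ᵥ D *ᵥ (Dd *ᵥ x) := by
    calc x ⬝ᵥ Dd *ᵥ x = x ⬝ᵥ (Dd * (D * Dd)) *ᵥ x := by rw [← mul_assoc, h.2.1]
    _ = x ⬝ᵥ Dd *ᵥ ((D * Dd) *ᵥ x) := by rw [mulVec_mulVec]
    _ = x ⬝ᵥ Ddᵀ *ᵥ ((D * Dd) *ᵥ x) := by rw [hds]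
    _ = (Dd *ᵥ x) ⬝ᵥ ((D * Dd) *ᵥ x) := dot_transpose_mulVec ..
    _ = (Dd *ᵥ x) ⬝ᵥ D *ᵥ (Dd *ᵥ x) := by rw [← mulVec_mulVec]
  rw [key]
  simpa using hD.dotProduct_mulVec_nonneg (Dd *ᵥ x)

lemma key_ineq {n d : ℕ} (X : Matrix (Fin n) (Fin d) ℝ)
    {D Dd : Matrix (Fin d) (Fin d) ℝ} (hD : D.PosSemidef)
    (h : IsMoorePenrose D Dd) {β : Fin d → ℝ} (hβ : β ∈ Set.range D.mulVec) :
    (X *ᵥ β) ⬝ᵥ (X *ᵥ β) ≤ (β ⬝ᵥ Dd *ᵥ β) * (X * D * Xᵀ).trace := by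
  have hsym : Dᵀ = D := by simpa [Matrix.IsSymm] using hD.1
  have hds := mp_symm hsym h
  obtain ⟨z, hz⟩ := hβ
  set w := Dd *ᵥ β with hw
  have hDw : D *ᵥ w = β := by
    rw [hw, mulVec_mulVec, ← hz, mulVec_mulVec, h.1]
  have hwDw : w ⬝ᵥ D *ᵥ w = β ⬝ᵥ Dd *ᵥ β := by
    rw [hDw, hw]
    conv_rhs => rw [← hds]
    exact (dot_transpose_mulVec ..).symm
  have hXb : ∀ i, (X *ᵥ β) i = X i ⬝ᵥ D *ᵥ w := by
    intro i; rw [hDw]; rfl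
  have hsq : (X *ᵥ β) ⬝ᵥ (X *ᵥ β) = ∑ i, (X i ⬝ᵥ D *ᵥ w)^2 := by
    rw [dotProduct]
    exact Finset.sum_congr rfl fun i _ => by rw [hXb i]; ring
  rw [hsq, trace_XDXt]
  calc ∑ i, (X i ⬝ᵥ D *ᵥ w)^2 ≤ ∑ i, (X i ⬝ᵥ D *ᵥ X i) * (w ⬝ᵥ D *ᵥ w) :=
        Finset.sum_le_sum fun i _ => cs_psd hD (X i) w
  _ = (β ⬝ᵥ Dd *ᵥ β) * ∑ i, X i ⬝ᵥ D *ᵥ X i := by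
        rw [← Finset.sum_mul, hwDw, mul_comm]

lemma amgm {p q c N : ℝ} (hp : 0 ≤ p) (hq : 0 ≤ q) (hN : 0 < N) (hc : 0 ≤ c)
    (h : c ≤ p * q) : 2 * Real.sqrt c / Real.sqrt N ≤ p + q / N := by
  have hqN : 0 ≤ q / N := div_nonneg hq hN.le
  have h1 : Real.sqrt (c / N) = Real.sqrt c / Real.sqrt N := Real.sqrt_div hc N
  have h2 : Real.sqrt (c / N) ≤ Real.sqrt (p * (q / N)) := by
    apply Real.sqrt_le_sqrt
    rw [div_le_iff₀ hN]
    calc c ≤ p * q := h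
    _ = p * (q/N) * N := by field_simp
  have h3 : 2 * Real.sqrt (p * (q/N)) ≤ p + q / N := by
    rw [Real.sqrt_mul hp]
    nlinarith [Real.sq_sqrt hp, Real.sq_sqrt hqN, Real.sqrt_nonneg p,
      Real.sqrt_nonneg (q/N), sq_nonneg (Real.sqrt p - Real.sqrt (q/N))]
  calc 2 * Real.sqrt c / Real.sqrt N = 2 * (Real.sqrt c / Real.sqrt N) := by ring
  _ = 2 * Real.sqrt (c / N) := by rw [h1]
  _ ≤ 2 * Real.sqrt (p * (q/N)) := by linarith
  _ ≤ p + q / N := h3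

lemma vecMulVec_mul' {k : ℕ} (u v u' v' : Fin k → ℝ) :
    vecMulVec u v * vecMulVec u' v' = (v ⬝ᵥ u') • vecMulVec u v' := by
  ext i j
  simp only [mul_apply, vecMulVec_apply, Matrix.smul_apply, dotProduct, smul_eq_mul,
    Finset.sum_mul, Finset.mul_sum]
  exact Finset.sum_congr rfl fun a _ => by ring

lemma vecMulVec_transpose' {k : ℕ} (u v : Fin k → ℝ) :
    (vecMulVec u v)ᵀ = vecMulVec v u := by
  ext i j; simp [vecMulVec_apply, mul_comm]

/-- The Moore–Penrose pseudoinverse of `v I`: `v⁻¹ I` for `v ≠ 0`, and `0` for `v = 0`. -/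
noncomputable def pinvScal (m : ℕ) (v : ℝ) : Matrix (Fin m) (Fin m) ℝ :=
  if v = 0 then 0 else v⁻¹ • 1

/-- The inner infimum over pairs `(D, v)` with `D` PSD and `v ≥ 0` such that
`y − Xβ ∈ range(v I)` and `β ∈ range(D)` of
`(y − Xβ)ᵀ (vI)† (y − Xβ) + βᵀ D† β + tr(X D Xᵀ + v I)/‖y‖₂²`. -/
noncomputable def innerInf {n d : ℕ} (y : Fin n → ℝ)
    (X : Matrix (Fin n) (Fin d) ℝ) (β : Fin d → ℝ) : ℝ :=
  sInf {r : ℝ | ∃ (D Dd : Matrix (Fin d) (Fin d) ℝ) (v : ℝ),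
    D.PosSemidef ∧ IsMoorePenrose D Dd ∧ 0 ≤ v ∧
    y - X.mulVec β ∈
      Set.range (Matrix.mulVec (v • (1 : Matrix (Fin n) (Fin n) ℝ))) ∧
    β ∈ Set.range D.mulVec ∧
    r = (y - X.mulVec β) ⬝ᵥ (pinvScal n v).mulVec (y - X.mulVec β) +
      β ⬝ᵥ Dd.mulVec β +
      (X * D * Xᵀ + v • (1 : Matrix (Fin n) (Fin n) ℝ)).trace / (y ⬝ᵥ y)}

lemma innerInf_eq {n d : ℕ} (y : Fin n → ℝ) (hy0 : y ≠ 0)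
    (X : Matrix (Fin n) (Fin d) ℝ) (β : Fin d → ℝ) :
    innerInf y X β =
      2 * Real.sqrt n * Real.sqrt ((y - X *ᵥ β) ⬝ᵥ (y - X *ᵥ β)) / Real.sqrt (y ⬝ᵥ y)
      + 2 * Real.sqrt ((X *ᵥ β) ⬝ᵥ (X *ᵥ β)) / Real.sqrt (y ⬝ᵥ y) := by
  set N : ℝ := y ⬝ᵥ y with hNdef
  set r : Fin n → ℝ := y - X *ᵥ β with hrdef
  set a : ℝ := r ⬝ᵥ r with hadef
  set c : ℝ := (X *ᵥ β) ⬝ᵥ (X *ᵥ β) with hcdef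
  have hN : 0 < N := by
    have h1 : 0 ≤ N := Finset.sum_nonneg fun i _ => mul_self_nonneg _
    rcases h1.lt_or_eq with h | h
    · exact h
    · exact absurd (dotProduct_self_eq_zero.mp h.symm) hy0
  have hn : 0 < n := by
    rcases Nat.eq_zero_or_pos n with h | h
    · exact absurd (funext fun i => absurd (h ▸ i).2 (by omega)) hy0
    · exact h
  have ha : 0 ≤ a := Finset.sum_nonneg fun i _ => mul_self_nonneg _
  have hc : 0 ≤ c := Finset.sum_nonneg fun i _ => mul_self_nonneg _
  have hsN : 0 < Real.sqrt N := Real.sqrt_pos.mpr hN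
  have hsn : 0 < Real.sqrt (n:ℝ) := Real.sqrt_pos.mpr (by exact_mod_cast hn)
  set E : ℝ := 2 * Real.sqrt n * Real.sqrt a / Real.sqrt N + 2 * Real.sqrt c / Real.sqrt N
    with hEdef
  set S := {s : ℝ | ∃ (D Dd : Matrix (Fin d) (Fin d) ℝ) (v : ℝ),
    D.PosSemidef ∧ IsMoorePenrose D Dd ∧ 0 ≤ v ∧
    r ∈ Set.range (Matrix.mulVec (v • (1 : Matrix (Fin n) (Fin n) ℝ))) ∧
    β ∈ Set.range D.mulVec ∧
    s = r ⬝ᵥ (pinvScal n v).mulVec r + β ⬝ᵥ Dd.mulVec β +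
      (X * D * Xᵀ + v • (1 : Matrix (Fin n) (Fin n) ℝ)).trace / N} with hSdef
  have hInner : innerInf y X β = sInf S := rfl
  -- the lower bound
  have lb : ∀ s ∈ S, E ≤ s := by
    rintro s ⟨D, Dd, v, hD, hmp, hv, ⟨u, hu⟩, hβr, hs⟩
    have hu' : v • u = r := by rwa [smul_mulVec, one_mulVec] at hu
    have htr : (X * D * Xᵀ + v • (1 : Matrix (Fin n) (Fin n) ℝ)).trace
        = (X * D * Xᵀ).trace + n * v := by rw [trace_add, trace_smul_one]
    have htrXD : 0 ≤ (X * D * Xᵀ).trace := by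
      rw [trace_XDXt]
      exact Finset.sum_nonneg fun i _ => by simpa using hD.dotProduct_mulVec_nonneg (X i)
    -- term 2
    have hterm2 : 2 * Real.sqrt c / Real.sqrt N
        ≤ β ⬝ᵥ Dd.mulVec β + (X * D * Xᵀ).trace / N :=
      amgm (mp_psd hD hmp β) htrXD hN hc (key_ineq X hD hmp hβr)
    -- term 1
    have hterm1 : 2 * Real.sqrt n * Real.sqrt a / Real.sqrt N
        ≤ r ⬝ᵥ (pinvScal n v).mulVec r + n * v / N := by
      have hna : 2 * Real.sqrt n * Real.sqrt a = 2 * Real.sqrt (n * a) := by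
        rw [Real.sqrt_mul (by positivity)]; ring
      rcases eq_or_lt_of_le hv with hv0 | hvpos
      · -- v = 0 : r = 0
        have hr0 : r = 0 := by rw [← hu', ← hv0, zero_smul]
        have ha0 : a = 0 := by rw [hadef, hr0]; simp
        rw [hna, pinvScal, if_pos hv0.symm, ha0, ← hv0]
        simp
      · have hvne : v ≠ 0 := ne_of_gt hvpos
        have hp : r ⬝ᵥ (pinvScal n v).mulVec r = a / v := by
          rw [pinvScal, if_neg hvne, smul_mulVec, one_mulVec, dotProduct_smul]
          simp [hadef, div_eq_inv_mul]
        rw [hp, hna]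
        exact amgm (by positivity) (by positivity) hN (by positivity)
          (le_of_eq (by field_simp))
    rw [hs, htr]
    have : (X * D * Xᵀ).trace / N + (n:ℝ) * v / N
        = ((X * D * Xᵀ).trace + n * v) / N := by ring
    linarith [hterm1, hterm2, this]
  -- construction for v
  have hmemv : ∃ v : ℝ, 0 ≤ v ∧
      r ∈ Set.range (Matrix.mulVec (v • (1 : Matrix (Fin n) (Fin n) ℝ))) ∧
      r ⬝ᵥ (pinvScal n v).mulVec r + n * v / N
        = 2 * Real.sqrt n * Real.sqrt a / Real.sqrt N := by
    by_cases hr0 : r = 0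
    · refine ⟨0, le_refl 0, ⟨0, by simp [hr0]⟩, ?_⟩
      have ha0 : a = 0 := by rw [hadef, hr0]; simp
      rw [pinvScal, if_pos rfl, ha0]
      simp
    · have ha' : 0 < a := by
        rcases ha.lt_or_eq with h | h
        · exact h
        · exact absurd (dotProduct_self_eq_zero.mp h.symm) hr0
      have hsa : 0 < Real.sqrt a := Real.sqrt_pos.mpr ha'
      set v : ℝ := Real.sqrt N * Real.sqrt a / Real.sqrt n with hvdef
      have hvpos : 0 < v := by positivity
      refine ⟨v, hvpos.le, ⟨v⁻¹ • r, ?_⟩, ?_⟩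
      · rw [smul_mulVec, one_mulVec, smul_smul, mul_inv_cancel₀ (ne_of_gt hvpos),
          one_smul]
      · have hp : r ⬝ᵥ (pinvScal n v).mulVec r = a / v := by
          rw [pinvScal, if_neg (ne_of_gt hvpos), smul_mulVec, one_mulVec,
            dotProduct_smul]
          simp [hadef, div_eq_inv_mul]
        have e1 : Real.sqrt N * Real.sqrt N = N := Real.mul_self_sqrt hN.le
        have e2 : Real.sqrt a * Real.sqrt a = a := Real.mul_self_sqrt ha'.le
        have e3 : Real.sqrt n * Real.sqrt n = (n:ℝ) :=
          Real.mul_self_sqrt (by positivity)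
        have t1 : a / v = Real.sqrt n * Real.sqrt a / Real.sqrt N := by
          rw [hvdef, div_div_eq_mul_div, div_eq_div_iff (by positivity) (ne_of_gt hsN)]
          linear_combination (-(Real.sqrt n * Real.sqrt N)) * e2
        have t2 : (n:ℝ) * v / N = Real.sqrt n * Real.sqrt a / Real.sqrt N := by
          rw [hvdef, ← mul_div_assoc, div_div,
            div_eq_div_iff (by positivity) (ne_of_gt hsN)]
          linear_combination ((n:ℝ) * Real.sqrt a) * e1 - (Real.sqrt a * N) * e3
        rw [hp, t1, t2]
        ring
  -- construction for D
  have hmemD : ∀ ε > 0, ∃ D Dd : Matrix (Fin d) (Fin d) ℝ,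
      D.PosSemidef ∧ IsMoorePenrose D Dd ∧ β ∈ Set.range D.mulVec ∧
      β ⬝ᵥ Dd.mulVec β + (X * D * Xᵀ).trace / N
        ≤ 2 * Real.sqrt c / Real.sqrt N + ε := by
    intro ε hε
    by_cases hβ0 : β = 0
    · refine ⟨0, 0, Matrix.PosSemidef.zero, ?_, ⟨0, by simp [hβ0]⟩, ?_⟩
      · refine ⟨by simp, by simp, by simp, by simp⟩
      · simp only [mulVec_zero, zero_mulVec, dotProduct_zero, mul_zero, zero_mul,
          trace_zero, zero_div, add_zero, Matrix.mul_zero, Matrix.zero_mul]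
        have h1 : 0 ≤ 2 * Real.sqrt c / Real.sqrt N := by positivity
        linarith
    · set b : ℝ := β ⬝ᵥ β with hbdef
      have hb : 0 < b := by
        have h1 : 0 ≤ b := Finset.sum_nonneg fun i _ => mul_self_nonneg _
        rcases h1.lt_or_eq with h | h
        · exact h
        · exact absurd (dotProduct_self_eq_zero.mp h.symm) hβ0
      set V : Matrix (Fin d) (Fin d) ℝ := vecMulVec β β with hVdef
      have hVV : V * V = b • V := by rw [hVdef, vecMulVec_mul']
      have hVt : Vᵀ = V := vecMulVec_transpose' β β
      have hprod : ∀ s s' : ℝ, (s • V) * (s' • V) = (s * s' * b) • V := by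
        intro s s'
        rw [smul_mul_assoc, mul_smul_comm, hVV, smul_smul, smul_smul, mul_assoc]
      have gen : ∀ t : ℝ, 0 < t → ∃ D Dd : Matrix (Fin d) (Fin d) ℝ,
          D.PosSemidef ∧ IsMoorePenrose D Dd ∧ β ∈ Set.range D.mulVec ∧
          β ⬝ᵥ Dd.mulVec β + (X * D * Xᵀ).trace / N = 1 / t + t * c / N := by
        intro t ht
        refine ⟨t • V, (t * b^2)⁻¹ • V, ?_, ⟨?_, ?_, ?_, ?_⟩, ⟨(t*b)⁻¹ • β, ?_⟩, ?_⟩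
        · rw [posSemidef_iff_dotProduct_mulVec]; constructor
          · show (t • V)ᴴ = t • V
            rw [conjTranspose_eq_transpose_of_trivial, transpose_smul, hVt]
          · intro x
            have : (t • V) *ᵥ x = (t * (β ⬝ᵥ x)) • β := by
              rw [smul_mulVec, vecMulVec_mulVec', smul_smul]
            rw [this]
            simp only [star_trivial, dotProduct_smul, smul_eq_mul]
            have hcomm : x ⬝ᵥ β = β ⬝ᵥ x := dotProduct_comm x β
            rw [hcomm]
            nlinarith [mul_self_nonneg (β ⬝ᵥ x), ht.le]
        · rw [hprod, hprod]
          congr 1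
          field_simp
        · rw [hprod, hprod]
          congr 1
          field_simp
        · rw [hprod, transpose_smul, hVt]
        · rw [hprod, transpose_smul, hVt]
        · rw [smul_mulVec, mulVec_smul, vecMulVec_mulVec', ← hbdef,
            smul_smul, smul_smul]
          have h1 : t * (t * b)⁻¹ * b = 1 := by field_simp
          rw [h1, one_smul]
        · have hq : β ⬝ᵥ ((t * b^2)⁻¹ • V) *ᵥ β = 1 / t := by
            rw [smul_mulVec, vecMulVec_mulVec', ← hbdef, dotProduct_smul,
              dotProduct_smul, smul_eq_mul, smul_eq_mul, ← hbdef]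
            field_simp
          have htr : (X * (t • V) * Xᵀ).trace = t * c := by
            rw [Matrix.mul_smul, Matrix.smul_mul, hVdef, conj_vecMulVec, trace_smul,
              trace_vecMulVec', smul_eq_mul, ← hcdef]
          rw [hq, htr]
      by_cases hc0 : c = 0
      · obtain ⟨D, Dd, hD, hmp, hβr, hval⟩ := gen (1/ε) (by positivity)
        refine ⟨D, Dd, hD, hmp, hβr, ?_⟩
        rw [hval, hc0, one_div_one_div]
        simp
      · have hcpos : 0 < c := lt_of_le_of_ne hc (Ne.symm hc0)
        have hsc : 0 < Real.sqrt c := Real.sqrt_pos.mpr hcpos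
        obtain ⟨D, Dd, hD, hmp, hβr, hval⟩ :=
          gen (Real.sqrt N / Real.sqrt c) (by positivity)
        refine ⟨D, Dd, hD, hmp, hβr, ?_⟩
        rw [hval]
        have e1 : Real.sqrt N * Real.sqrt N = N := Real.mul_self_sqrt hN.le
        have e2 : Real.sqrt c * Real.sqrt c = c := Real.mul_self_sqrt hc
        have h₂ : Real.sqrt N / Real.sqrt c * c / N = Real.sqrt c / Real.sqrt N := by
          rw [div_mul_eq_mul_div, div_div,
            div_eq_div_iff (by positivity) (ne_of_gt hsN)]
          linear_combination c * e1 - N * e2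
        have key : 1 / (Real.sqrt N / Real.sqrt c) + Real.sqrt N / Real.sqrt c * c / N
            = 2 * Real.sqrt c / Real.sqrt N := by
          rw [one_div_div, h₂]
          ring
        rw [key]
        linarith
  -- assembly
  obtain ⟨v, hv, hvr, hvval⟩ := hmemv
  obtain ⟨D0, Dd0, hD0, hmp0, hβr0, _⟩ := hmemD 1 one_pos
  have hne : S.Nonempty :=
    ⟨_, ⟨D0, Dd0, v, hD0, hmp0, hv, hvr, hβr0, rfl⟩⟩
  have hlower : E ≤ sInf S := le_csInf hne lb
  have hupper : ∀ ε > 0, sInf S ≤ E + ε := by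
    intro ε hε
    obtain ⟨D, Dd, hD, hmp, hβr, hval⟩ := hmemD ε hε
    have hmem : (r ⬝ᵥ (pinvScal n v).mulVec r + β ⬝ᵥ Dd.mulVec β +
        (X * D * Xᵀ + v • (1 : Matrix (Fin n) (Fin n) ℝ)).trace / N) ∈ S :=
      ⟨D, Dd, v, hD, hmp, hv, hvr, hβr, rfl⟩
    refine (csInf_le ⟨E, lb⟩ hmem).trans ?_
    have htr : (X * D * Xᵀ + v • (1 : Matrix (Fin n) (Fin n) ℝ)).trace
        = (X * D * Xᵀ).trace + n * v := by rw [trace_add, trace_smul_one]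
    rw [htr, hEdef]
    have hsplit : ((X * D * Xᵀ).trace + n * v) / N
        = (X * D * Xᵀ).trace / N + (n:ℝ) * v / N := by ring
    linarith [hvval, hval, hsplit]
  rw [hInner]
  exact le_antisymm (le_of_forall_pos_le_add hupper) hlower

/-- The criterion `√(MSPE(β)) + (1/√n) ‖β‖_{Ĉ}` with `Ĉ = XᵀX/n`. -/
noncomputable def gCrit {n d : ℕ} (y : Fin n → ℝ)
    (X : Matrix (Fin n) (Fin d) ℝ) (β : Fin d → ℝ) : ℝ :=
  Real.sqrt ((y - X.mulVec β) ⬝ᵥ (y - X.mulVec β) / n) +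
    (1 / Real.sqrt n) *
      Real.sqrt (β ⬝ᵥ ((1 / (n : ℝ)) • (Xᵀ * X)).mulVec β)

/-- The inner infimum equals `(2n/‖y‖₂)(√(MSPE(β)) + (1/√n)‖β‖_{Ĉ})`;
consequently minimizing it over `β` is equivalent to minimizing the criterion
with tuned `Ĉ`-weighted ℓ₂ regularization. -/
theorem stmt19 {n d : ℕ} (y : Fin n → ℝ) (hy0 : y ≠ 0)
    (X : Matrix (Fin n) (Fin d) ℝ) :
    (∀ β : Fin d → ℝ,
      innerInf y X β = 2 * n / Real.sqrt (y ⬝ᵥ y) * gCrit y X β) ∧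
    (∀ β : Fin d → ℝ,
      (∀ γ : Fin d → ℝ, innerInf y X β ≤ innerInf y X γ) ↔
        (∀ γ : Fin d → ℝ, gCrit y X β ≤ gCrit y X γ)) := by
  have hN : 0 < y ⬝ᵥ y := by
    have h1 : 0 ≤ y ⬝ᵥ y := Finset.sum_nonneg fun i _ => mul_self_nonneg _
    rcases h1.lt_or_eq with h | h
    · exact h
    · exact absurd (dotProduct_self_eq_zero.mp h.symm) hy0
  have hn : 0 < n := by
    rcases Nat.eq_zero_or_pos n with h | h
    · exact absurd (funext fun i => absurd (h ▸ i).2 (by omega)) hy0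
    · exact h
  have hsN : 0 < Real.sqrt (y ⬝ᵥ y) := Real.sqrt_pos.mpr hN
  have hsn : 0 < Real.sqrt (n:ℝ) := Real.sqrt_pos.mpr (by exact_mod_cast hn)
  have hkey : ∀ β : Fin d → ℝ,
      innerInf y X β = 2 * n / Real.sqrt (y ⬝ᵥ y) * gCrit y X β := by
    intro β
    have ha : (0:ℝ) ≤ (y - X *ᵥ β) ⬝ᵥ (y - X *ᵥ β) :=
      Finset.sum_nonneg fun i _ => mul_self_nonneg _
    have hc : (0:ℝ) ≤ (X *ᵥ β) ⬝ᵥ (X *ᵥ β) :=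
      Finset.sum_nonneg fun i _ => mul_self_nonneg _
    have hq : β ⬝ᵥ ((1 / (n : ℝ)) • (Xᵀ * X)).mulVec β
        = ((X *ᵥ β) ⬝ᵥ (X *ᵥ β)) / n := by
      rw [smul_mulVec, dotProduct_smul, smul_eq_mul, ← mulVec_mulVec,
        dot_transpose_mulVec]
      ring
    rw [innerInf_eq y hy0 X β, gCrit, hq]
    rw [Real.sqrt_div ha, Real.sqrt_div hc]
    set sn : ℝ := Real.sqrt (n:ℝ) with hsndef
    set sa : ℝ := Real.sqrt ((y - X *ᵥ β) ⬝ᵥ (y - X *ᵥ β)) with hsadef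
    set sc : ℝ := Real.sqrt ((X *ᵥ β) ⬝ᵥ (X *ᵥ β)) with hscdef
    set sN : ℝ := Real.sqrt (y ⬝ᵥ y) with hsNdef
    have e3 : sn * sn = (n:ℝ) := Real.mul_self_sqrt (by positivity)
    rw [← e3]
    field_simp
  refine ⟨hkey, fun β => ?_⟩
  have hcpos : 0 < 2 * (n:ℝ) / Real.sqrt (y ⬝ᵥ y) := by positivity
  constructor
  · intro h γ
    have h2 := h γ
    rw [hkey β, hkey γ] at h2
    exact le_of_mul_le_mul_left h2 hcpos
  · intro h γ
    rw [hkey β, hkey γ]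
    exact mul_le_mul_of_nonneg_left (h γ) hcpos.le
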